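/- Let κ ∈ ℝ and let P(t) = ∑_{h=0}^{d} p_h t^h be a polynomial with p_d ≠ 0 and κ ≠ 0. Define a_n to be the n-th Taylor coefficient of e^{κt} P(t) at t = 0, i.e. a_n = ∑_{h=0}^{min(d,n)} p_h κ^{n-h}/(n-h)!. Then for every 0 < ε < 1 there exists N such that for all n ≥ N, (|κ|^n/n!)(1-ε)^n < |a_n| < (|κ|^n/n!)(1+ε)^n. -/

import Mathlib

open Filter Finset Topology

lemma aux_desc_tendsto (h d : ℕ) (hhd : h ≤ d) :
    Tendsto (fun n : ℕ => (n.descFactorial h : ℝ) / (n : ℝ) ^ d) atTop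
      (𝓝 (if h = d then 1 else 0)) := by
  have hprod : Tendsto (fun n : ℕ => ∏ i ∈ range h, (1 - (i : ℝ) / n)) atTop (𝓝 1) := by
    have : Tendsto (fun n : ℕ => ∏ i ∈ range h, (1 - (i : ℝ) / n)) atTop
        (𝓝 (∏ i ∈ range h, (1 : ℝ))) := by
      refine tendsto_finset_prod _ fun i _ => ?_
      simpa using tendsto_const_nhds.sub (tendsto_const_div_atTop_nhds_zero_nat (i : ℝ))
    simpa using this
  have hpow : Tendsto (fun n : ℕ => ((n : ℝ) ^ (d - h))⁻¹) atTop
      (𝓝 (if h = d then 1 else 0)) := by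
    rcases eq_or_lt_of_le hhd with rfl | hlt
    · simp
    · rw [if_neg hlt.ne]
      exact Tendsto.inv_tendsto_atTop
        ((tendsto_pow_atTop (Nat.sub_ne_zero_of_lt hlt)).comp tendsto_natCast_atTop_atTop)
  have key := hprod.mul hpow
  rw [one_mul] at key
  refine key.congr' ?_
  filter_upwards [eventually_ge_atTop (d + 1)] with n hn
  have hdn : d ≤ n := le_trans (Nat.le_succ d) hn
  have hn0 : (0 : ℝ) < n := by
    exact_mod_cast lt_of_lt_of_le (Nat.succ_pos d) hn
  have hcast : (n.descFactorial h : ℝ) = ∏ i ∈ range h, ((n : ℝ) - i) := by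
    rw [Nat.descFactorial_eq_prod_range, Nat.cast_prod]
    refine Finset.prod_congr rfl fun i hi => ?_
    exact Nat.cast_sub (le_trans (le_of_lt (lt_of_lt_of_le (mem_range.mp hi) hhd)) hdn)
  have hnh : (n : ℝ) ^ h = ∏ _i ∈ range h, (n : ℝ) := by simp
  have hprodeq : ∏ i ∈ range h, (1 - (i : ℝ) / n) = (n.descFactorial h : ℝ) / (n : ℝ) ^ h := by
    rw [hcast, hnh, ← Finset.prod_div_distrib]
    exact Finset.prod_congr rfl fun i _ => by rw [one_sub_div hn0.ne']
  have hdd : (n : ℝ) ^ d = (n : ℝ) ^ h * (n : ℝ) ^ (d - h) := by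
    rw [← pow_add, Nat.add_sub_cancel' hhd]
  rw [hprodeq, hdd]
  ring


/-- If `a_n` is the `n`-th Taylor coefficient of `e^{κt} P(t)` where `P` is a polynomial of
degree `d` with `p_d ≠ 0` and `κ ≠ 0`, then `{|a_n|} ≈ {|κ|^n / n!}` in the `(1±ε)^n`
squeeze sense. -/
theorem taylor_coeff_exp_poly (κ : ℝ) (hκ : κ ≠ 0) (d : ℕ) (p : ℕ → ℝ) (hd : p d ≠ 0)
    (a : ℕ → ℝ)
    (ha : ∀ n : ℕ, a n = ∑ h ∈ Finset.range (min d n + 1),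
      p h * κ ^ (n - h) / Nat.factorial (n - h)) :
    ∀ ε : ℝ, 0 < ε → ε < 1 → ∃ N : ℕ, ∀ n ≥ N,
      (|κ| ^ n / Nat.factorial n) * (1 - ε) ^ n < |a n| ∧
      |a n| < (|κ| ^ n / Nat.factorial n) * (1 + ε) ^ n := by
  set L : ℝ := p d / κ ^ d with hLdef
  have hLne : L ≠ 0 := div_ne_zero hd (pow_ne_zero _ hκ)
  have hLpos : 0 < |L| := abs_pos.mpr hLne
  set f : ℕ → ℝ := fun n => ∑ h ∈ range (d + 1), p h / κ ^ h * (n.descFactorial h : ℝ)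
    with hfdef
  have key : ∀ n, d ≤ n → a n = κ ^ n / n.factorial * f n := by
    intro n hn
    rw [ha n, min_eq_left hn, hfdef, Finset.mul_sum]
    refine Finset.sum_congr rfl fun h hh => ?_
    have hhn : h ≤ n := le_trans (Nat.lt_succ_iff.mp (mem_range.mp hh)) hn
    have hfact : ((n - h).factorial : ℝ) * (n.descFactorial h : ℝ) = (n.factorial : ℝ) := by
      exact_mod_cast congrArg (Nat.cast (R := ℝ)) (Nat.factorial_mul_descFactorial hhn)
    have h1 : ((n - h).factorial : ℝ) ≠ 0 := Nat.cast_ne_zero.mpr (Nat.factorial_ne_zero _)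
    have h2 : ((n).factorial : ℝ) ≠ 0 := Nat.cast_ne_zero.mpr (Nat.factorial_ne_zero _)
    have h3 : κ ^ h ≠ 0 := pow_ne_zero _ hκ
    rw [pow_sub₀ κ hκ hhn]
    field_simp
    linear_combination (-(p h)) * hfact
  have habs : ∀ n, d ≤ n → |a n| = |κ| ^ n / n.factorial * |f n| := by
    intro n hn
    rw [key n hn, abs_mul, abs_div, abs_pow, Nat.abs_cast]
  have hlim : Tendsto (fun n : ℕ => f n / (n : ℝ) ^ d) atTop (𝓝 L) := by
    have hsum : Tendsto (fun n : ℕ => ∑ h ∈ range (d + 1),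
        p h / κ ^ h * ((n.descFactorial h : ℝ) / (n : ℝ) ^ d)) atTop
        (𝓝 (∑ h ∈ range (d + 1), p h / κ ^ h * (if h = d then 1 else 0))) := by
      refine tendsto_finset_sum _ fun h hh => ?_
      exact (aux_desc_tendsto h d (Nat.lt_succ_iff.mp (mem_range.mp hh))).const_mul _
    have hLeq : (∑ h ∈ range (d + 1), p h / κ ^ h * (if h = d then 1 else 0)) = L := by
      simp [mul_ite, Finset.sum_ite_eq', Nat.lt_succ_iff, hLdef]
    rw [hLeq] at hsum
    refine hsum.congr fun n => ?_
    rw [hfdef, Finset.sum_div]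
    exact Finset.sum_congr rfl fun h _ => by ring
  have habslim : Tendsto (fun n : ℕ => |f n| / (n : ℝ) ^ d) atTop (𝓝 |L|) := by
    refine hlim.abs.congr fun n => ?_
    rw [abs_div, abs_pow, Nat.abs_cast]
  intro ε hε0 hε1
  have ev1 : ∀ᶠ n : ℕ in atTop, |L| / 2 < |f n| / (n : ℝ) ^ d :=
    habslim.eventually_const_lt (by linarith)
  have ev2 : ∀ᶠ n : ℕ in atTop, |f n| / (n : ℝ) ^ d < 2 * |L| :=
    habslim.eventually_lt_const (by linarith)
  have ev3 : ∀ᶠ n : ℕ in atTop, (n : ℝ) ^ d / (1 + ε) ^ n < 1 / (2 * |L|) := by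
    refine (tendsto_pow_const_div_const_pow_of_one_lt d (by linarith)).eventually_lt_const ?_
    positivity
  have ev4 : ∀ᶠ n : ℕ in atTop, (1 - ε) ^ n < |L| / 2 := by
    refine (tendsto_pow_atTop_nhds_zero_of_lt_one (by linarith) (by linarith)).eventually_lt_const ?_
    positivity
  have ev5 : ∀ᶠ n : ℕ in atTop, d + 1 ≤ n := eventually_ge_atTop (d + 1)
  obtain ⟨N, hN⟩ := eventually_atTop.mp ((((ev1.and ev2).and ev3).and ev4).and ev5)
  refine ⟨N, fun n hn => ?_⟩
  obtain ⟨⟨⟨⟨h1, h2⟩, h3⟩, h4⟩, h5⟩ := hN n hn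
  have hdn : d ≤ n := le_trans (Nat.le_succ d) h5
  have hn0 : (0 : ℝ) < n := by exact_mod_cast lt_of_lt_of_le (Nat.succ_pos d) h5
  have hnd0 : (0 : ℝ) < (n : ℝ) ^ d := pow_pos hn0 d
  have hnd1 : (1 : ℝ) ≤ (n : ℝ) ^ d := one_le_pow₀ (by exact_mod_cast Nat.one_le_iff_ne_zero.mpr (by omega))
  have hC : (0 : ℝ) < |κ| ^ n / n.factorial := by positivity
  have hfl : |L| / 2 * (n : ℝ) ^ d < |f n| := by
    rw [lt_div_iff₀ hnd0] at h1
    linarith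
  have hfu : |f n| < 2 * |L| * (n : ℝ) ^ d := by
    rw [div_lt_iff₀ hnd0] at h2
    linarith
  have hup : 2 * |L| * (n : ℝ) ^ d < (1 + ε) ^ n := by
    have hpow : (0 : ℝ) < (1 + ε) ^ n := by positivity
    rw [div_lt_div_iff₀ hpow (by positivity)] at h3
    calc 2 * |L| * (n : ℝ) ^ d = (n : ℝ) ^ d * (2 * |L|) := by ring
    _ < 1 * (1 + ε) ^ n := h3
    _ = (1 + ε) ^ n := by ring
  have hlo : (1 - ε) ^ n < |L| / 2 * (n : ℝ) ^ d := by
    calc (1 - ε) ^ n < |L| / 2 := h4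
    _ = |L| / 2 * 1 := by ring
    _ ≤ |L| / 2 * (n : ℝ) ^ d := by
        apply mul_le_mul_of_nonneg_left hnd1 (by positivity)
  rw [habs n hdn]
  constructor
  · exact (mul_lt_mul_iff_right₀ hC).mpr (lt_trans hlo hfl)
  · exact (mul_lt_mul_iff_right₀ hC).mpr (lt_trans hfu hup)
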